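/- Let ⟨Σ,Δ⟩ be a finite default theory, ⟨Ξ,A⟩ its associated argumentation system, and φ a formula of L_P where P = Var(⟨Σ,Δ⟩). Then φ is a skeptical consequence of ⟨Σ,Δ⟩ (i.e., φ belongs to all extensions) if and only if dt(Ξ) ⊆ {α⁺ : α ∈ sp(φ;Ξ)}. -/

import Mathlib

/-! ## Classical propositional logic -/

/-- Propositional formulas over a set of variables `V`. -/
inductive PropForm (V : Type) : Type
  | var : V → PropForm V
  | verum : PropForm V
  | falsum : PropForm V
  | neg : PropForm V → PropForm V
  | conj : PropForm V → PropForm V → PropForm V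
  | disj : PropForm V → PropForm V → PropForm V
  | impl : PropForm V → PropForm V → PropForm V

namespace PropForm

/-- Truth-value of a formula under an assignment. -/
def eval {V : Type} (v : V → Bool) : PropForm V → Bool
  | var a => v a
  | verum => true
  | falsum => false
  | neg φ => !(eval v φ)
  | conj φ ψ => eval v φ && eval v ψ
  | disj φ ψ => eval v φ || eval v ψ
  | impl φ ψ => !(eval v φ) || eval v ψ

/-- Renaming/embedding of variables. -/
def map {V W : Type} (f : V → W) : PropForm V → PropForm W
  | var a => var (f a)
  | verum => verum
  | falsum => falsum
  | neg φ => neg (map f φ)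
  | conj φ ψ => conj (map f φ) (map f ψ)
  | disj φ ψ => disj (map f φ) (map f ψ)
  | impl φ ψ => impl (map f φ) (map f ψ)

/-- The set of variables occurring in a formula. -/
def vars {V : Type} : PropForm V → Set V
  | var a => {a}
  | verum => ∅
  | falsum => ∅
  | neg φ => vars φ
  | conj φ ψ => vars φ ∪ vars ψ
  | disj φ ψ => vars φ ∪ vars ψ
  | impl φ ψ => vars φ ∪ vars ψ

end PropForm

/-- An assignment satisfies a set of formulas. -/
def Satisfies {V : Type} (v : V → Bool) (S : Set (PropForm V)) : Prop :=
  ∀ φ ∈ S, φ.eval v = true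

/-- Satisfiability (= consistency, by classical completeness) of a set of formulas. -/
def Satisfiable {V : Type} (S : Set (PropForm V)) : Prop :=
  ∃ v, Satisfies v S

/-- `S ⊢ φ` (classical propositional derivability = semantic entailment). -/
def Entails {V : Type} (S : Set (PropForm V)) (φ : PropForm V) : Prop :=
  ∀ v, Satisfies v S → φ.eval v = true

/-- `Th S`: the deductive closure of `S`. -/
def Th {V : Type} (S : Set (PropForm V)) : Set (PropForm V) :=
  {φ | Entails S φ}

/-! ## Default logic -/

/-- A default `pre : jus₁, …, jus_k / con`. -/
structure Default (P : Type) : Type where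
  pre : PropForm P
  jus : List (PropForm P)
  con : PropForm P

/-- `E` is an extension of the default theory `⟨S, Δ⟩` (Reiter, via the
sequence characterization): there is a sequence `Es` with `Es 0 = S`,
`Es (j+1) = Th (Es j) ∪ con {δ ∈ Δ : pre δ ∈ Es j and ¬β ∉ E for each justification β}`
and `E = ⋃ j, Es j`. -/
def IsExtension {P : Type} (S : Set (PropForm P)) (Δ : Finset (Default P))
    (E : Set (PropForm P)) : Prop :=
  ∃ Es : ℕ → Set (PropForm P),
    Es 0 = S ∧
    (∀ j, Es (j + 1) = Th (Es j) ∪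
      {γ | ∃ δ ∈ Δ, γ = δ.con ∧ δ.pre ∈ Es j ∧ ∀ β ∈ δ.jus, PropForm.neg β ∉ E}) ∧
    E = ⋃ j, Es j

/-! ## The translation into an argumentation system -/

/-- Fresh assumption propositions: one prerequisitional assumption `a_δ^p`,
justificational assumptions `a_{δ,i}^j`, and one consequential assumption `a_δ^c`
for each default `δ`. -/
inductive ALabel (P : Type) : Type
  | pre : Default P → ALabel P
  | jus : Default P → ℕ → ALabel P
  | con : Default P → ALabel P

/-- The variables of the argumentation theory: the original propositions `P`
together with the fresh assumptions. -/
abbrev VA (P : Type) : Type := P ⊕ ALabel P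

/-- Embedding of formulas of `L_P` into the extended language. -/
def emb {P : Type} (φ : PropForm P) : PropForm (VA P) :=
  φ.map Sum.inl

/-- The assumption `a` as an atomic formula. -/
def avar {P : Type} (a : ALabel P) : PropForm (VA P) :=
  PropForm.var (Sum.inr a)

/-- The translation `t(δ) = {a_δ^p → ¬pre(δ)} ∪ {a_{δ,i}^j → β_i} ∪ {a_δ^c → con(δ)}`. -/
def transDefault {P : Type} (δ : Default P) : Set (PropForm (VA P)) :=
  {PropForm.impl (avar (ALabel.pre δ)) (PropForm.neg (emb δ.pre))} ∪
  {φ | ∃ i : Fin δ.jus.length, φ = PropForm.impl (avar (ALabel.jus δ i)) (emb (δ.jus.get i))} ∪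
  {PropForm.impl (avar (ALabel.con δ)) (emb δ.con)}

/-- `Ξ = Σ ∪ ⋃_{δ ∈ Δ} t(δ)`, the argumentation theory associated with `⟨S, Δ⟩`. -/
def Xi {P : Type} (S : Set (PropForm P)) (Δ : Finset (Default P)) :
    Set (PropForm (VA P)) :=
  (emb '' S) ∪ ⋃ δ ∈ Δ, transDefault δ

/-! ## Terms, inconsistency, structures -/

/-- A literal over the assumptions: an assumption together with a sign. -/
structure ALit (P : Type) : Type where
  atom : ALabel P
  sign : Bool

/-- A term: a set of assumption literals with no complementary pair.
(The trivial term `{⊤}`, imposing no assumptions, is represented by `∅`.) -/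
def IsTerm {P : Type} (α : Set (ALit P)) : Prop :=
  ∀ a : ALabel P, ¬ (ALit.mk a true ∈ α ∧ ALit.mk a false ∈ α)

/-- The literal `ℓ` as a formula. -/
def ALit.form {P : Type} (ℓ : ALit P) : PropForm (VA P) :=
  if ℓ.sign then avar ℓ.atom else PropForm.neg (avar ℓ.atom)

/-- A set of literals as a set of formulas. -/
def litForms {P : Type} (α : Set (ALit P)) : Set (PropForm (VA P)) :=
  ALit.form '' α

/-- `α ∈ I(Ξ)`: the term `α` is inconsistent relative to `Ξ`,
i.e. `α ∪ Ξ` is unsatisfiable. -/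
def InI {P : Type} (Ξ : Set (PropForm (VA P))) (α : Set (ALit P)) : Prop :=
  ¬ Satisfiable (Ξ ∪ litForms α)

/-- `μI(Ξ)`: the minimal contradictions, i.e. the inconsistent terms none of whose
proper subsets is inconsistent relative to `Ξ`. -/
def muI {P : Type} (Ξ : Set (PropForm (VA P))) : Set (Set (ALit P)) :=
  {α | IsTerm α ∧ InI Ξ α ∧ ∀ β, β ⊂ α → ¬ InI Ξ β}

/-- `⟨α, 𝒜⟩` is a structure: `α` is a term consistent with `Ξ` and each single
literal of `𝒜` can be consistently added to `α`. -/
def IsStruct {P : Type} (Ξ : Set (PropForm (VA P))) (α 𝒜 : Set (ALit P)) : Prop :=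
  IsTerm α ∧ ¬ InI Ξ α ∧ ∀ ℓ ∈ 𝒜, ¬ InI Ξ (insert ℓ α)

/-- The (positive) prerequisitional assumption literal `a_δ^p` of `δ`. -/
def preLit {P : Type} (δ : Default P) : ALit P := ⟨ALabel.pre δ, true⟩

/-- The (positive) justificational assumption literal `a_{δ,i}^j` of `δ`. -/
def jusLit {P : Type} (δ : Default P) (i : ℕ) : ALit P := ⟨ALabel.jus δ i, true⟩

/-- The (positive) consequential assumption literal `a_δ^c` of `δ`. -/
def conLit {P : Type} (δ : Default P) : ALit P := ⟨ALabel.con δ, true⟩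

/-- The set of justificational assumption literals of `δ`. -/
def jusLits {P : Type} (δ : Default P) : Set (ALit P) :=
  {ℓ | ∃ i : Fin δ.jus.length, ℓ = jusLit δ i}

/-- `α ⊆ A_c`: `α` is a consequential term (every literal of `α` is the positive
consequential assumption of some default of `Δ`). -/
def ConsTerm {P : Type} (Δ : Finset (Default P)) (α : Set (ALit P)) : Prop :=
  ∀ ℓ ∈ α, ∃ δ ∈ Δ, ℓ = conLit δ

/-- The default assumption of `δ` is applicable w.r.t. the consequential term `α`:
`{a_δ^p} ∪ α ∈ I(Ξ)` and `{a_{δ,i}^j} ∪ α ∉ I(Ξ)` for every justification index `i`. -/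
def Applicable {P : Type} (Ξ : Set (PropForm (VA P))) (δ : Default P)
    (α : Set (ALit P)) : Prop :=
  InI Ξ (insert (preLit δ) α) ∧
  ∀ i : Fin δ.jus.length, ¬ InI Ξ (insert (jusLit δ i) α)

/-! ## Accessible structures and default terms -/

/-- One application step of the map `a_δ^≺` in the applicable case:
add `a_δ^c` to the anchor and the justificational assumptions of `δ`
to the set of irrelevant literals. -/
def stepPair {P : Type} (δ : Default P) (p : Set (ALit P) × Set (ALit P)) :
    Set (ALit P) × Set (ALit P) :=
  (insert (conLit δ) p.1, jusLits δ ∪ p.2)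

/-- The CJ-pair obtained by successively applying the default assumptions of `L`
starting from `⟨{⊤}, ∅⟩` (the trivial term being represented by `∅`). -/
def runList {P : Type} (L : List (Default P)) : Set (ALit P) × Set (ALit P) :=
  L.foldl (fun p δ => stepPair δ p) (∅, ∅)

/-- Starting from the CJ-pair `p`, the defaults of the list can be applied one
after the other: at each step the current pair is a structure and the next
default assumption is applicable w.r.t. the current anchor. -/
def ValidFrom {P : Type} (Ξ : Set (PropForm (VA P))) :
    Set (ALit P) × Set (ALit P) → List (Default P) → Prop
  | _, [] => True
  | p, δ :: L => IsStruct Ξ p.1 p.2 ∧ Applicable Ξ δ p.1 ∧ ValidFrom Ξ (stepPair δ p) L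

/-- `L` is a generating sequence of the structure `⟨α, 𝒜⟩`: a sequence of pairwise
distinct default assumptions of `Δ`, applicable one after the other starting from
`⟨{⊤}, ∅⟩`, ending exactly in the structure `⟨α, 𝒜⟩`, and such that no default
assumption of `Δ` applicable w.r.t. `α` is missing from the sequence. -/
def GenSeq {P : Type} (Ξ : Set (PropForm (VA P))) (Δ : Finset (Default P))
    (L : List (Default P)) (α 𝒜 : Set (ALit P)) : Prop :=
  L.Nodup ∧ (∀ δ ∈ L, δ ∈ Δ) ∧ ValidFrom Ξ (∅, ∅) L ∧ runList L = (α, 𝒜) ∧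
  IsStruct Ξ α 𝒜 ∧ ∀ δ ∈ Δ, Applicable Ξ δ α → δ ∈ L

/-- The structure `⟨α, 𝒜⟩` is accessible (w.r.t. the default assumptions of `Δ`). -/
def Accessible {P : Type} (Ξ : Set (PropForm (VA P))) (Δ : Finset (Default P))
    (α 𝒜 : Set (ALit P)) : Prop :=
  ∃ L : List (Default P), GenSeq Ξ Δ L α 𝒜

/-- `dt(Ξ)`: the default terms, i.e. the anchors of accessible structures. -/
def dt {P : Type} (Ξ : Set (PropForm (VA P))) (Δ : Finset (Default P)) :
    Set (Set (ALit P)) :=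
  {α | ∃ 𝒜, Accessible Ξ Δ α 𝒜}

/-! ## Supporting arguments -/

/-- `sp(φ; Ξ)`: the supporting arguments for `φ`, i.e. the terms `α` with
`α, Ξ ⊢ φ` such that every term extending `α` is consistent with `Ξ`. -/
def sp {P : Type} (Ξ : Set (PropForm (VA P))) (φ : PropForm (VA P)) :
    Set (Set (ALit P)) :=
  {α | IsTerm α ∧ Entails (Ξ ∪ litForms α) φ ∧
    ∀ α', IsTerm α' → α ⊆ α' → ¬ InI Ξ α'}

/-- `α⁺ = α ∩ A`: the positive literals of the term `α`. -/
def posPart {P : Type} (α : Set (ALit P)) : Set (ALit P) :=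
  {ℓ ∈ α | ℓ.sign = true}

/-! ## Auxiliary development -/

section Aux

variable {P : Type}

/-- Evaluation commutes with variable renaming. -/
theorem eval_map {V W : Type} (f : V → W) (w : W → Bool) :
    ∀ φ : PropForm V, (φ.map f).eval w = φ.eval (w ∘ f) := by
  intro φ; induction φ <;> simp [PropForm.map, PropForm.eval, *]

theorem eval_emb (w : VA P → Bool) (φ : PropForm P) :
    (emb φ).eval w = φ.eval (w ∘ Sum.inl) := eval_map _ _ _

theorem sat_mono {V : Type} {T T' : Set (PropForm V)} (h : Satisfiable T) (hs : T' ⊆ T) :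
    Satisfiable T' := by
  obtain ⟨v, hv⟩ := h; exact ⟨v, fun ψ hψ => hv ψ (hs hψ)⟩

theorem entails_mono {V : Type} {T T' : Set (PropForm V)} {φ : PropForm V}
    (h : Entails T' φ) (hs : T' ⊆ T) : Entails T φ := by
  intro v hv; exact h v (fun ψ hψ => hv ψ (hs hψ))

theorem subset_Th {V : Type} (T : Set (PropForm V)) : T ⊆ Th T :=
  fun φ hφ v hv => hv φ hφ

theorem Th_mono {V : Type} {T T' : Set (PropForm V)} (hs : T' ⊆ T) : Th T' ⊆ Th T :=
  fun _ hφ => entails_mono hφ hs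

theorem satisfies_Th {V : Type} {T : Set (PropForm V)} {v : V → Bool}
    (hv : Satisfies v T) : Satisfies v (Th T) := fun _ hφ => hφ v hv

theorem Th_Th {V : Type} (T : Set (PropForm V)) : Th (Th T) ⊆ Th T :=
  fun _ hφ v hv => hφ v (satisfies_Th hv)

theorem not_sat_insert_neg_iff {V : Type} {T : Set (PropForm V)} {φ : PropForm V} :
    ¬ Satisfiable (insert (PropForm.neg φ) T) ↔ Entails T φ := by
  constructor
  · intro h v hv
    by_contra hne
    exact h ⟨v, fun ψ hψ => by
      rcases hψ with rfl | hψ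
      · simp [PropForm.eval]; simpa using hne
      · exact hv ψ hψ⟩
  · rintro h ⟨v, hv⟩
    have h1 := hv _ (Set.mem_insert _ _)
    have h2 := h v (fun ψ hψ => hv ψ (Set.mem_insert_of_mem _ hψ))
    simp [PropForm.eval, h2] at h1

theorem sat_insert_iff_not_entails_neg {V : Type} {T : Set (PropForm V)} {φ : PropForm V} :
    Satisfiable (insert φ T) ↔ ¬ Entails T (PropForm.neg φ) := by
  constructor
  · rintro ⟨v, hv⟩ h
    have h1 := hv _ (Set.mem_insert _ _)
    have h2 := h v (fun ψ hψ => hv ψ (Set.mem_insert_of_mem _ hψ))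
    simp [PropForm.eval, h1] at h2
  · intro h
    by_contra hns
    apply h
    intro v hv
    by_contra hne
    exact hns ⟨v, fun ψ hψ => by
      rcases hψ with rfl | hψ
      · simpa [PropForm.eval] using hne
      · exact hv ψ hψ⟩

theorem mem_Th_iff {V : Type} {T : Set (PropForm V)} {φ : PropForm V} :
    φ ∈ Th T ↔ Entails T φ := Iff.rfl

end Aux

section Bridge

variable {P : Type}

/-- The P-level formulas forced by the positive literals of a term. -/
def forcedSet (Δ : Finset (Default P)) (α : Set (ALit P)) : Set (PropForm P) :=
  {ψ | ∃ δ ∈ Δ, (⟨ALabel.pre δ, true⟩ : ALit P) ∈ α ∧ ψ = PropForm.neg δ.pre} ∪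
  {ψ | ∃ δ ∈ Δ, ∃ i : Fin δ.jus.length,
      (⟨ALabel.jus δ i, true⟩ : ALit P) ∈ α ∧ ψ = δ.jus.get i} ∪
  {ψ | ∃ δ ∈ Δ, (⟨ALabel.con δ, true⟩ : ALit P) ∈ α ∧ ψ = δ.con}

open Classical in
/-- Lift a P-assignment to the extended language, making an assumption true
iff it occurs positively in `α`. -/
noncomputable def liftVal (α : Set (ALit P)) (v : P → Bool) : VA P → Bool :=
  Sum.elim v (fun a => if (⟨a, true⟩ : ALit P) ∈ α then true else false)

theorem liftVal_inl (α : Set (ALit P)) (v : P → Bool) :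
    (liftVal α v) ∘ Sum.inl = v := rfl

theorem modelDown {Sg : Set (PropForm P)} {Δ : Finset (Default P)} {α : Set (ALit P)}
    {w : VA P → Bool} (hw : Satisfies w (Xi Sg Δ ∪ litForms α)) :
    Satisfies (w ∘ Sum.inl) (Sg ∪ forcedSet Δ α) := by
  have hXi : ∀ χ ∈ Xi Sg Δ, χ.eval w = true := fun χ hχ => hw χ (Or.inl hχ)
  have hlit : ∀ ℓ ∈ α, (ALit.form ℓ).eval w = true :=
    fun ℓ hℓ => hw _ (Or.inr ⟨ℓ, hℓ, rfl⟩)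
  intro ψ hψ
  rcases hψ with hψ | hψ
  · have := hXi (emb ψ) (Or.inl ⟨ψ, hψ, rfl⟩)
    rwa [eval_emb] at this
  · have key : ∀ (a : ALabel P) (χ : PropForm (VA P)),
        (⟨a, true⟩ : ALit P) ∈ α → (PropForm.impl (avar a) χ) ∈ Xi Sg Δ →
        χ.eval w = true := by
      intro a χ ha hχ
      have h1 := hlit _ ha
      have h2 := hXi _ hχ
      simp [ALit.form, avar, PropForm.eval] at h1
      simp [PropForm.eval, h1] at h2
      simpa [avar, PropForm.eval, h1] using h2
    rcases hψ with (⟨δ, hδ, ha, rfl⟩ | ⟨δ, hδ, i, ha, rfl⟩) | ⟨δ, hδ, ha, rfl⟩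
    · have := key _ _ ha (Or.inr (Set.mem_biUnion hδ (Or.inl (Or.inl rfl))))
      simpa [PropForm.eval, eval_emb] using this
    · have := key _ _ ha (Or.inr (Set.mem_biUnion hδ (Or.inl (Or.inr ⟨i, rfl⟩))))
      rwa [eval_emb] at this
    · have := key _ _ ha (Or.inr (Set.mem_biUnion hδ (Or.inr rfl)))
      rwa [eval_emb] at this

theorem modelUp {Sg : Set (PropForm P)} {Δ : Finset (Default P)} {α : Set (ALit P)}
    (hα : IsTerm α) {v : P → Bool} (hv : Satisfies v (Sg ∪ forcedSet Δ α)) :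
    Satisfies (liftVal α v) (Xi Sg Δ ∪ litForms α) := by
  have hS : ∀ ψ ∈ Sg, ψ.eval v = true := fun ψ hψ => hv ψ (Or.inl hψ)
  have hF : ∀ ψ ∈ forcedSet Δ α, ψ.eval v = true := fun ψ hψ => hv ψ (Or.inr hψ)
  intro χ hχ
  rcases hχ with (⟨ψ, hψ, rfl⟩ | hχ) | ⟨ℓ, hℓ, rfl⟩
  · rw [eval_emb, liftVal_inl]; exact hS ψ hψ
  · rcases Set.mem_iUnion₂.mp hχ with ⟨δ, hδ, hχ⟩
    have himp : ∀ (a : ALabel P) (ψ : PropForm P),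
        ((⟨a, true⟩ : ALit P) ∈ α → ψ ∈ forcedSet Δ α) →
        (PropForm.impl (avar a) (emb ψ)).eval (liftVal α v) = true := by
      intro a ψ hmem
      by_cases ha : (⟨a, true⟩ : ALit P) ∈ α
      · have := hF ψ (hmem ha)
        simp [PropForm.eval, avar, liftVal, ha, eval_emb, liftVal_inl, this]
      · simp [PropForm.eval, avar, liftVal, ha]
    rcases hχ with (rfl | ⟨i, rfl⟩) | rfl
    · have : (PropForm.impl (avar (ALabel.pre δ)) (emb (PropForm.neg δ.pre))).eval
          (liftVal α v) = true := by
        apply himp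
        intro ha
        exact Or.inl (Or.inl ⟨δ, hδ, ha, rfl⟩)
      simpa [emb, PropForm.map, PropForm.eval] using this
    · exact himp _ _ (fun ha => Or.inl (Or.inr ⟨δ, hδ, i, ha, rfl⟩))
    · exact himp _ _ (fun ha => Or.inr ⟨δ, hδ, ha, rfl⟩)
  · rcases ℓ with ⟨a, s⟩
    cases s
    · have hna : (⟨a, true⟩ : ALit P) ∉ α := fun h => hα a ⟨h, hℓ⟩
      simp [ALit.form, avar, PropForm.eval, liftVal, hna]
    · simp [ALit.form, avar, PropForm.eval, liftVal, hℓ]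

theorem InI_iff {Sg : Set (PropForm P)} {Δ : Finset (Default P)} {α : Set (ALit P)}
    (hα : IsTerm α) :
    InI (Xi Sg Δ) α ↔ ¬ Satisfiable (Sg ∪ forcedSet Δ α) := by
  unfold InI
  constructor
  · intro h hs
    obtain ⟨v, hv⟩ := hs
    exact h ⟨liftVal α v, modelUp hα hv⟩
  · rintro h ⟨w, hw⟩
    exact h ⟨w ∘ Sum.inl, modelDown hw⟩

theorem entails_emb_iff {Sg : Set (PropForm P)} {Δ : Finset (Default P)} {α : Set (ALit P)}
    (hα : IsTerm α) {φ : PropForm P} :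
    Entails (Xi Sg Δ ∪ litForms α) (emb φ) ↔ Entails (Sg ∪ forcedSet Δ α) φ := by
  constructor
  · intro h v hv
    have := h (liftVal α v) (modelUp hα hv)
    rwa [eval_emb, liftVal_inl] at this
  · intro h w hw
    rw [eval_emb]
    exact h _ (modelDown hw)

end Bridge

section Lists

variable {P : Type}

/-- The set of consequential assumption literals of the defaults in `L`. -/
def conLitSet (L : List (Default P)) : Set (ALit P) := {ℓ | ∃ δ ∈ L, ℓ = conLit δ}

/-- The set of consequences of the defaults in `L`. -/
def conSet (L : List (Default P)) : Set (PropForm P) := {ψ | ∃ δ ∈ L, ψ = δ.con}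

/-- The base theory of a list of defaults. -/
def baseOf (Sg : Set (PropForm P)) (L : List (Default P)) : Set (PropForm P) :=
  Sg ∪ conSet L

theorem conLitSet_nil : conLitSet ([] : List (Default P)) = ∅ := by
  ext ℓ; simp [conLitSet]

theorem conLitSet_cons (δ : Default P) (L : List (Default P)) :
    conLitSet (δ :: L) = insert (conLit δ) (conLitSet L) := by
  ext ℓ; simp [conLitSet, Set.mem_insert_iff, or_comm]

theorem conLitSet_append (L₁ L₂ : List (Default P)) :
    conLitSet (L₁ ++ L₂) = conLitSet L₁ ∪ conLitSet L₂ := by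
  ext ℓ; simp [conLitSet, or_and_right, exists_or]

theorem conLitSet_pos {L : List (Default P)} {ℓ : ALit P} (h : ℓ ∈ conLitSet L) :
    ℓ.sign = true := by
  obtain ⟨δ, _, rfl⟩ := h; rfl

theorem isTerm_of_pos {α : Set (ALit P)} (h : ∀ ℓ ∈ α, ℓ.sign = true) : IsTerm α := by
  intro a ⟨_, h2⟩
  exact absurd (h _ h2) (by simp)

theorem isTerm_conLitSet (L : List (Default P)) : IsTerm (conLitSet L) :=
  isTerm_of_pos fun _ h => conLitSet_pos h

theorem isTerm_insert_pos {α : Set (ALit P)} (h : ∀ ℓ ∈ α, ℓ.sign = true)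
    (ℓ₀ : ALit P) (h₀ : ℓ₀.sign = true) : IsTerm (insert ℓ₀ α) := by
  apply isTerm_of_pos
  rintro ℓ (rfl | hℓ)
  · exact h₀
  · exact h ℓ hℓ

/-- Anchor of `runList`. -/
theorem runList_fst (L : List (Default P)) :
    ∀ p : Set (ALit P) × Set (ALit P),
      (L.foldl (fun p δ => stepPair δ p) p).1 = p.1 ∪ conLitSet L := by
  induction L with
  | nil => intro p; simp [conLitSet_nil]
  | cons δ L ih =>
      intro p
      simp only [List.foldl_cons]
      rw [ih, conLitSet_cons, stepPair]
      ext ℓ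
      simp [Set.mem_insert_iff]
      tauto

/-- Irrelevance part of `runList`. -/
theorem runList_snd (L : List (Default P)) :
    ∀ p : Set (ALit P) × Set (ALit P),
      (L.foldl (fun p δ => stepPair δ p) p).2 = p.2 ∪ {ℓ | ∃ δ ∈ L, ℓ ∈ jusLits δ} := by
  induction L with
  | nil => intro p; ext ℓ; simp
  | cons δ L ih =>
      intro p
      simp only [List.foldl_cons]
      rw [ih, stepPair]
      ext ℓ
      simp [Set.mem_union]
      tauto

theorem runList_eq (L : List (Default P)) :
    runList L = (conLitSet L, {ℓ | ∃ δ ∈ L, ℓ ∈ jusLits δ}) := by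
  unfold runList
  ext1
  · rw [runList_fst]; simp
  · rw [runList_snd]; simp

end Lists

section Forced

variable {P : Type} {Δ : Finset (Default P)}

theorem mem_posPart_true {α : Set (ALit P)} (a : ALabel P) :
    (⟨a, true⟩ : ALit P) ∈ posPart α ↔ (⟨a, true⟩ : ALit P) ∈ α :=
  ⟨fun h => h.1, fun h => ⟨h, rfl⟩⟩

theorem forcedSet_posPart (α : Set (ALit P)) :
    forcedSet Δ (posPart α) = forcedSet Δ α := by
  ext ψ
  constructor
  · rintro ((⟨δ', hδ', h, rfl⟩ | ⟨δ', hδ', i, h, rfl⟩) | ⟨δ', hδ', h, rfl⟩)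
    · exact Or.inl (Or.inl ⟨δ', hδ', (mem_posPart_true _).mp h, rfl⟩)
    · exact Or.inl (Or.inr ⟨δ', hδ', i, (mem_posPart_true _).mp h, rfl⟩)
    · exact Or.inr ⟨δ', hδ', (mem_posPart_true _).mp h, rfl⟩
  · rintro ((⟨δ', hδ', h, rfl⟩ | ⟨δ', hδ', i, h, rfl⟩) | ⟨δ', hδ', h, rfl⟩)
    · exact Or.inl (Or.inl ⟨δ', hδ', (mem_posPart_true _).mpr h, rfl⟩)
    · exact Or.inl (Or.inr ⟨δ', hδ', i, (mem_posPart_true _).mpr h, rfl⟩)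
    · exact Or.inr ⟨δ', hδ', (mem_posPart_true _).mpr h, rfl⟩

theorem forcedSet_insert_pre {δ : Default P} (hδ : δ ∈ Δ) (α : Set (ALit P)) :
    forcedSet Δ (insert (preLit δ) α) =
      insert (PropForm.neg δ.pre) (forcedSet Δ α) := by
  ext ψ
  simp only [forcedSet, preLit, Set.mem_insert_iff, Set.mem_union, Set.mem_setOf_eq,
    ALit.mk.injEq]
  constructor
  · rintro ((⟨δ', hδ', (⟨h, -⟩ | h), rfl⟩ | ⟨δ', hδ', i, (⟨h, -⟩ | h), rfl⟩) |
      ⟨δ', hδ', (⟨h, -⟩ | h), rfl⟩)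
    · cases ALabel.pre.inj h; exact Or.inl rfl
    · exact Or.inr (Or.inl (Or.inl ⟨δ', hδ', h, rfl⟩))
    · exact absurd h (by simp)
    · exact Or.inr (Or.inl (Or.inr ⟨δ', hδ', i, h, rfl⟩))
    · exact absurd h (by simp)
    · exact Or.inr (Or.inr ⟨δ', hδ', h, rfl⟩)
  · rintro (rfl | ((⟨δ', hδ', h, rfl⟩ | ⟨δ', hδ', i, h, rfl⟩) | ⟨δ', hδ', h, rfl⟩))
    · exact Or.inl (Or.inl ⟨δ, hδ, Or.inl ⟨rfl, trivial⟩, rfl⟩)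
    · exact Or.inl (Or.inl ⟨δ', hδ', Or.inr h, rfl⟩)
    · exact Or.inl (Or.inr ⟨δ', hδ', i, Or.inr h, rfl⟩)
    · exact Or.inr ⟨δ', hδ', Or.inr h, rfl⟩

theorem forcedSet_insert_jus {δ : Default P} (hδ : δ ∈ Δ) (i : Fin δ.jus.length)
    (α : Set (ALit P)) :
    forcedSet Δ (insert (jusLit δ i) α) =
      insert (δ.jus.get i) (forcedSet Δ α) := by
  ext ψ
  simp only [forcedSet, jusLit, Set.mem_insert_iff, Set.mem_union, Set.mem_setOf_eq,
    ALit.mk.injEq]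
  constructor
  · rintro ((⟨δ', hδ', (⟨h, -⟩ | h), rfl⟩ | ⟨δ', hδ', i', (⟨h, -⟩ | h), rfl⟩) |
      ⟨δ', hδ', (⟨h, -⟩ | h), rfl⟩)
    · exact absurd h (by simp)
    · exact Or.inr (Or.inl (Or.inl ⟨δ', hδ', h, rfl⟩))
    · obtain ⟨rfl, hi⟩ := ALabel.jus.inj h
      exact Or.inl (by rw [show i' = i from Fin.ext hi])
    · exact Or.inr (Or.inl (Or.inr ⟨δ', hδ', i', h, rfl⟩))
    · exact absurd h (by simp)
    · exact Or.inr (Or.inr ⟨δ', hδ', h, rfl⟩)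
  · rintro (rfl | ((⟨δ', hδ', h, rfl⟩ | ⟨δ', hδ', i', h, rfl⟩) | ⟨δ', hδ', h, rfl⟩))
    · exact Or.inl (Or.inr ⟨δ, hδ, i, Or.inl ⟨rfl, trivial⟩, rfl⟩)
    · exact Or.inl (Or.inl ⟨δ', hδ', Or.inr h, rfl⟩)
    · exact Or.inl (Or.inr ⟨δ', hδ', i', Or.inr h, rfl⟩)
    · exact Or.inr ⟨δ', hδ', Or.inr h, rfl⟩

theorem forcedSet_conLitSet {L : List (Default P)} (hL : ∀ δ ∈ L, δ ∈ Δ) :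
    forcedSet Δ (conLitSet L) = conSet L := by
  ext ψ
  simp only [forcedSet, conLitSet, conLit, conSet, Set.mem_union, Set.mem_setOf_eq,
    ALit.mk.injEq]
  constructor
  · rintro ((⟨δ', hδ', ⟨δ'', hδ'', h⟩, rfl⟩ | ⟨δ', hδ', i, ⟨δ'', hδ'', h⟩, rfl⟩) |
      ⟨δ', hδ', ⟨δ'', hδ'', h⟩, rfl⟩)
    · exact absurd h (by simp)
    · exact absurd h (by simp)
    · cases ALabel.con.inj h.1
      exact ⟨δ', hδ'', rfl⟩
  · rintro ⟨δ', hδ', rfl⟩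
    exact Or.inr ⟨δ', hL δ' hδ', ⟨δ', hδ', ⟨rfl, trivial⟩⟩, rfl⟩

end Forced

section PLevel

variable {P : Type}

theorem conSet_nil : conSet ([] : List (Default P)) = ∅ := by
  ext ψ; simp [conSet]

theorem conSet_append (L₁ L₂ : List (Default P)) :
    conSet (L₁ ++ L₂) = conSet L₁ ∪ conSet L₂ := by
  ext ψ; simp [conSet, or_and_right, exists_or]

theorem conSet_singleton (δ : Default P) : conSet [δ] = {δ.con} := by
  ext ψ; simp [conSet]

theorem conSet_mono {L₁ L₂ : List (Default P)} (h : ∀ δ ∈ L₁, δ ∈ L₂) :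
    conSet L₁ ⊆ conSet L₂ := by
  rintro ψ ⟨δ, hδ, rfl⟩; exact ⟨δ, h δ hδ, rfl⟩

theorem baseOf_append_singleton (Sg : Set (PropForm P)) (L : List (Default P))
    (δ : Default P) :
    baseOf Sg (L ++ [δ]) = insert δ.con (baseOf Sg L) := by
  rw [baseOf, conSet_append, conSet_singleton, baseOf]
  ext ψ; simp [Set.mem_insert_iff]

theorem baseOf_mono {Sg : Set (PropForm P)} {L₁ L₂ : List (Default P)}
    (h : ∀ δ ∈ L₁, δ ∈ L₂) : baseOf Sg L₁ ⊆ baseOf Sg L₂ :=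
  Set.union_subset_union_right _ (conSet_mono h)

/-- P-level groundedness of a list of defaults relative to a prefix. -/
def Grounded (Sg : Set (PropForm P)) : List (Default P) → List (Default P) → Prop
  | _, [] => True
  | L₁, δ :: L₂ => Entails (baseOf Sg L₁) δ.pre ∧ Grounded Sg (L₁ ++ [δ]) L₂

/-- The canonical stage sequence of a candidate extension. -/
def mkEs (Sg : Set (PropForm P)) (Δ : Finset (Default P)) (E : Set (PropForm P)) :
    ℕ → Set (PropForm P)
  | 0 => Sg
  | (j + 1) => Th (mkEs Sg Δ E j) ∪
      {γ | ∃ δ ∈ Δ, γ = δ.con ∧ δ.pre ∈ mkEs Sg Δ E j ∧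
        ∀ β ∈ δ.jus, PropForm.neg β ∉ E}

theorem mkEs_succ_subset (Sg : Set (PropForm P)) (Δ : Finset (Default P))
    (E : Set (PropForm P)) (j : ℕ) : mkEs Sg Δ E j ⊆ mkEs Sg Δ E (j + 1) :=
  fun ψ h => Or.inl (subset_Th _ h)

theorem mkEs_mono (Sg : Set (PropForm P)) (Δ : Finset (Default P))
    (E : Set (PropForm P)) {j k : ℕ} (h : j ≤ k) : mkEs Sg Δ E j ⊆ mkEs Sg Δ E k := by
  induction k with
  | zero => cases Nat.le_zero.mp h; exact subset_rfl
  | succ k ih =>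
      rcases Nat.lt_or_ge j (k+1) with h' | h'
      · exact subset_trans (ih (Nat.lt_succ_iff.mp h')) (mkEs_succ_subset _ _ _ _)
      · cases Nat.le_antisymm h h'; exact subset_rfl

theorem isExtension_of_mkEs {Sg : Set (PropForm P)} {Δ : Finset (Default P)}
    {E : Set (PropForm P)} (h : E = ⋃ j, mkEs Sg Δ E j) : IsExtension Sg Δ E :=
  ⟨mkEs Sg Δ E, rfl, fun _ => rfl, h⟩

/-- The extension built from a grounded, closed, justification-consistent list. -/
theorem isExtension_of_list {Sg : Set (PropForm P)} {Δ : Finset (Default P)}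
    {L : List (Default P)}
    (hL : ∀ δ ∈ L, δ ∈ Δ)
    (hgrd : Grounded Sg [] L)
    (hjus : ∀ δ ∈ L, ∀ i : Fin δ.jus.length,
      Satisfiable (insert (δ.jus.get i) (baseOf Sg L)))
    (hcl : ∀ δ ∈ Δ, Entails (baseOf Sg L) δ.pre →
      (∀ i : Fin δ.jus.length, Satisfiable (insert (δ.jus.get i) (baseOf Sg L))) →
      δ ∈ L) :
    IsExtension Sg Δ (Th (baseOf Sg L)) := by
  set B := baseOf Sg L with hB
  set E := Th B with hE
  apply isExtension_of_mkEs
  have hjusE : ∀ δ ∈ L, ∀ β ∈ δ.jus, PropForm.neg β ∉ E := by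
    intro δ hδ β hβ hneg
    obtain ⟨i, rfl⟩ := List.mem_iff_get.mp hβ
    have := sat_insert_iff_not_entails_neg.mp (hjus δ hδ i)
    exact this hneg
  -- upper bound: every stage is contained in Th B
  have hup : ∀ j, mkEs Sg Δ E j ⊆ E := by
    intro j
    induction j with
    | zero => exact subset_trans (Set.subset_union_left) (subset_Th _)
    | succ j ih =>
        rintro ψ (hψ | ⟨δ, hδ, rfl, hpre, hjusδ⟩)
        · exact Th_Th _ (Th_mono ih hψ)
        · have h1 : Entails B δ.pre := ih hpre
          have h2 : ∀ i : Fin δ.jus.length, Satisfiable (insert (δ.jus.get i) B) := by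
            intro i
            exact sat_insert_iff_not_entails_neg.mpr (hjusδ _ (List.get_mem _ i))
          have hδL := hcl δ hδ h1 h2
          exact subset_Th _ (Or.inr ⟨δ, hδL, rfl⟩)
  -- lower bound: B is reached at some finite stage
  have hdown : ∀ L₂ L₁ n, (∀ δ ∈ L₂, δ ∈ L) → Grounded Sg L₁ L₂ →
      baseOf Sg L₁ ⊆ mkEs Sg Δ E n →
      ∃ m, baseOf Sg (L₁ ++ L₂) ⊆ mkEs Sg Δ E m := by
    intro L₂
    induction L₂ with
    | nil => intro L₁ n _ _ h; exact ⟨n, by simpa using h⟩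
    | cons δ L₂ ih =>
        intro L₁ n hmem hgr hbase
        obtain ⟨hent, hgr'⟩ := hgr
        have hδL : δ ∈ L := hmem δ List.mem_cons_self
        have hpre : δ.pre ∈ mkEs Sg Δ E (n + 1) :=
          Or.inl (entails_mono hent hbase)
        have hcon : δ.con ∈ mkEs Sg Δ E (n + 2) :=
          Or.inr ⟨δ, hL δ hδL, rfl, hpre, hjusE δ hδL⟩
        have hbase' : baseOf Sg (L₁ ++ [δ]) ⊆ mkEs Sg Δ E (n + 2) := by
          rw [baseOf_append_singleton]
          rintro ψ (rfl | hψ)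
          · exact hcon
          · exact mkEs_mono _ _ _ (by omega) (hbase hψ)
        obtain ⟨m, hm⟩ := ih (L₁ ++ [δ]) (n + 2)
          (fun δ' h => hmem δ' (List.mem_cons_of_mem _ h)) hgr' hbase'
        exact ⟨m, by simpa using hm⟩
  obtain ⟨m, hm⟩ := hdown L [] 0 (fun δ h => h) hgrd
    (by rintro ψ (hψ | ⟨δ, hδ, rfl⟩); exacts [hψ, absurd hδ List.not_mem_nil])
  apply Set.Subset.antisymm
  · intro ψ hψ
    apply Set.mem_iUnion.mpr ⟨m + 1, _⟩
    exact Or.inl (entails_mono hψ (by simpa using hm))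
  · intro ψ hψ
    obtain ⟨_, ⟨j, rfl⟩, hj⟩ := hψ
    exact hup j hj

end PLevel

section Decompose

variable {P : Type}

theorem ext_decompose {Sg : Set (PropForm P)} {Δ : Finset (Default P)}
    {E : Set (PropForm P)} (hE : IsExtension Sg Δ E) :
    (∀ ψ, ψ ∈ E) ∨
    ∃ L : List (Default P), L.Nodup ∧ (∀ δ ∈ L, δ ∈ Δ) ∧ Grounded Sg [] L ∧
      Satisfiable (baseOf Sg L) ∧
      (∀ δ ∈ L, ∀ i : Fin δ.jus.length,
        Satisfiable (insert (δ.jus.get i) (baseOf Sg L))) ∧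
      (∀ δ ∈ Δ, Entails (baseOf Sg L) δ.pre →
        (∀ i : Fin δ.jus.length, Satisfiable (insert (δ.jus.get i) (baseOf Sg L))) →
        δ ∈ L) ∧
      Th (baseOf Sg L) = E := by
  classical
  obtain ⟨Es, h0, hstep, hEeq⟩ := hE
  by_cases hall : ∀ ψ, ψ ∈ E
  · exact Or.inl hall
  right
  have hEsub : ∀ j, Es j ⊆ E := by
    intro j ψ h; rw [hEeq]; exact Set.mem_iUnion.mpr ⟨j, h⟩
  have hmono1 : ∀ j, Es j ⊆ Es (j + 1) := by
    intro j ψ h; rw [hstep j]; exact Or.inl (subset_Th _ h)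
  have hmono : ∀ {j k}, j ≤ k → Es j ⊆ Es k := by
    intro j k h
    induction k with
    | zero => cases Nat.le_zero.mp h; exact subset_rfl
    | succ k ih =>
        rcases Nat.lt_or_ge j (k+1) with h' | h'
        · exact subset_trans (ih (Nat.lt_succ_iff.mp h')) (hmono1 k)
        · cases Nat.le_antisymm h h'; exact subset_rfl
  have hsatj : ∀ j, Satisfiable (Es j) := by
    intro j
    by_contra hns
    apply hall
    intro ψ
    have : Entails (Es j) ψ := fun v hv => absurd ⟨v, hv⟩ hns
    have : ψ ∈ Es (j + 1) := by rw [hstep j]; exact Or.inl this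
    exact hEsub _ this
  -- the generating defaults
  set fired : Default P → Prop :=
    fun δ => (∃ j, δ.pre ∈ Es j) ∧ ∀ β ∈ δ.jus, PropForm.neg β ∉ E with hfired
  set D : Finset (Default P) := Δ.filter fired with hD
  set st : Default P → ℕ :=
    fun δ => if h : ∃ j, δ.pre ∈ Es j then Nat.find h else 0 with hst
  have hstmem : ∀ δ, (∃ j, δ.pre ∈ Es j) → δ.pre ∈ Es (st δ) := by
    intro δ h
    simp only [hst, dif_pos h]
    exact Nat.find_spec h
  have hstle : ∀ δ (h : ∃ j, δ.pre ∈ Es j) {j}, δ.pre ∈ Es j → st δ ≤ j := by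
    intro δ h j hj
    simp only [hst, dif_pos h]
    exact Nat.find_min' h hj
  set r : Default P → Default P → Prop := fun a b => st a ≤ st b with hr
  haveI : IsTotal (Default P) r := ⟨fun a b => Nat.le_total _ _⟩
  haveI : IsTrans (Default P) r := ⟨fun a b c => Nat.le_trans⟩
  set L : List (Default P) := List.insertionSort r D.toList with hLdef
  have hperm : List.Perm (List.insertionSort r D.toList) D.toList := List.perm_insertionSort r _
  have hnodup : L.Nodup := hperm.nodup_iff.mpr D.nodup_toList
  have hmemL : ∀ δ, δ ∈ L ↔ δ ∈ D := by
    intro δ; rw [hLdef, hperm.mem_iff, Finset.mem_toList]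
  have hpair : List.Pairwise r L := List.pairwise_insertionSort r _
  have hLΔ : ∀ δ ∈ L, δ ∈ Δ := by
    intro δ h; exact Finset.mem_of_mem_filter δ ((hmemL δ).mp h)
  have hfiredL : ∀ δ ∈ L, fired δ := by
    intro δ h
    exact (Finset.mem_filter.mp ((hmemL δ).mp h)).2
  -- Claim A: stagewise entailment from earlier consequences
  have claimA : ∀ j ψ, ψ ∈ Es j →
      Entails (Sg ∪ {χ | ∃ δ, δ ∈ D ∧ st δ < j ∧ χ = δ.con}) ψ := by
    intro j
    induction j with
    | zero =>
        intro ψ h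
        rw [h0] at h
        exact fun v hv => hv ψ (Or.inl h)
    | succ j ih =>
        intro ψ h
        rw [hstep j] at h
        rcases h with h | ⟨δ, hδ, rfl, hpre, hjusδ⟩
        · intro v hv
          apply h
          intro χ hχ
          apply ih χ hχ
          intro χ' hχ'
          apply hv
          rcases hχ' with h' | ⟨δ', h1, h2, h3⟩
          · exact Or.inl h'
          · exact Or.inr ⟨δ', h1, Nat.lt_succ_of_lt h2, h3⟩
        · have hδD : δ ∈ D := Finset.mem_filter.mpr ⟨hδ, ⟨j, hpre⟩, hjusδ⟩
          have hlt : st δ < j + 1 := Nat.lt_succ_of_le (hstle δ ⟨j, hpre⟩ hpre)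
          exact fun v hv => hv _ (Or.inr ⟨δ, hδD, hlt, rfl⟩)
  -- every stage is below Th (baseOf Sg L)
  have hup : ∀ j, Es j ⊆ Th (baseOf Sg L) := by
    intro j
    induction j with
    | zero => rw [h0]; exact subset_trans Set.subset_union_left (subset_Th _)
    | succ j ih =>
        intro ψ h
        rw [hstep j] at h
        rcases h with h | ⟨δ, hδ, rfl, hpre, hjusδ⟩
        · exact Th_Th _ (Th_mono ih h)
        · have hδD : δ ∈ D := Finset.mem_filter.mpr ⟨hδ, ⟨j, hpre⟩, hjusδ⟩
          exact subset_Th _ (Or.inr ⟨δ, (hmemL δ).mpr hδD, rfl⟩)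
  -- baseOf Sg L is reached at a single finite stage
  have hcons : ∀ δ ∈ L, δ.con ∈ Es (st δ + 1) := by
    intro δ h
    have hf := hfiredL δ h
    rw [hstep (st δ)]
    exact Or.inr ⟨δ, hLΔ δ h, rfl, hstmem δ hf.1, hf.2⟩
  have hbound : ∀ L' : List (Default P), (∀ δ ∈ L', δ.con ∈ Es (st δ + 1)) →
      ∃ m, ∀ δ ∈ L', δ.con ∈ Es m := by
    intro L'
    induction L' with
    | nil => exact fun _ => ⟨0, by simp⟩
    | cons δ L'' ih =>
        intro h
        obtain ⟨m, hm⟩ := ih (fun δ' h' => h δ' (List.mem_cons_of_mem _ h'))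
        refine ⟨max m (st δ + 1), ?_⟩
        intro δ' hδ'
        rcases List.mem_cons.mp hδ' with rfl | h'
        · exact hmono (Nat.le_max_right _ _) (h δ' List.mem_cons_self)
        · exact hmono (Nat.le_max_left _ _) (hm δ' h')
  obtain ⟨m, hm⟩ := hbound L hcons
  have hBm : baseOf Sg L ⊆ Es m := by
    rintro ψ (hψ | ⟨δ, hδ, rfl⟩)
    · exact hmono (Nat.zero_le m) (by rw [h0]; exact hψ)
    · exact hm δ hδ
  have hThE : Th (baseOf Sg L) = E := by
    apply Set.Subset.antisymm
    · intro ψ hψ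
      have : ψ ∈ Th (Es m) := entails_mono hψ hBm
      have : ψ ∈ Es (m + 1) := by rw [hstep m]; exact Or.inl this
      exact hEsub _ this
    · intro ψ hψ
      rw [hEeq] at hψ
      obtain ⟨_, ⟨j, rfl⟩, hj⟩ := hψ
      exact hup j hj
  have hsatB : Satisfiable (baseOf Sg L) := sat_mono (hsatj m) hBm
  have hjusL : ∀ δ ∈ L, ∀ i : Fin δ.jus.length,
      Satisfiable (insert (δ.jus.get i) (baseOf Sg L)) := by
    intro δ h i
    apply sat_insert_iff_not_entails_neg.mpr
    intro hent
    refine (hfiredL δ h).2 _ (List.get_mem _ i) ?_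
    rw [← hThE]; exact hent
  -- groundedness
  have hg : ∀ δ ∈ L, Entails (Sg ∪ {χ | ∃ δ', δ' ∈ D ∧ st δ' < st δ ∧ χ = δ'.con})
      δ.pre := by
    intro δ h
    exact claimA (st δ) δ.pre (hstmem δ (hfiredL δ h).1)
  have hgrd : ∀ L₂ L₁, L₁ ++ L₂ = L → Grounded Sg L₁ L₂ := by
    intro L₂
    induction L₂ with
    | nil => intro L₁ _; trivial
    | cons δ L₂' ih =>
        intro L₁ happ
        have hδL : δ ∈ L := by
          rw [← happ]; exact List.mem_append_right _ List.mem_cons_self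
        constructor
        · apply entails_mono (hg δ hδL)
          apply Set.union_subset_union_right
          rintro χ ⟨δ', hδ'D, hlt, rfl⟩
          have hδ'L : δ' ∈ L := (hmemL δ').mpr hδ'D
          have hδ'L₁ : δ' ∈ L₁ := by
            rw [← happ] at hδ'L
            rcases List.mem_append.mp hδ'L with h' | h'
            · exact h'
            · rcases List.mem_cons.mp h' with h' | h'
              · rw [h'] at hlt; exact absurd hlt (lt_irrefl _)
              · exfalso
                have hsub : List.Pairwise r (δ :: L₂') := by
                  rw [← happ] at hpair
                  exact hpair.sublist (List.sublist_append_right _ _)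
                have := (List.pairwise_cons.mp hsub).1 δ' h'
                rw [hr] at this
                omega
          exact ⟨δ', hδ'L₁, rfl⟩
        · apply ih
          rw [← happ, List.append_assoc]; rfl
  have hclosed : ∀ δ ∈ Δ, Entails (baseOf Sg L) δ.pre →
      (∀ i : Fin δ.jus.length, Satisfiable (insert (δ.jus.get i) (baseOf Sg L))) →
      δ ∈ L := by
    intro δ hδ hent hjusδ
    apply (hmemL δ).mpr
    apply Finset.mem_filter.mpr
    refine ⟨hδ, ?_, ?_⟩
    · have : δ.pre ∈ E := by rw [← hThE]; exact hent
      rw [hEeq] at this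
      obtain ⟨_, ⟨j, rfl⟩, hj⟩ := this
      exact ⟨j, hj⟩
    · intro β hβ hneg
      obtain ⟨i, rfl⟩ := List.mem_iff_get.mp hβ
      rw [← hThE] at hneg
      exact sat_insert_iff_not_entails_neg.mp (hjusδ i) hneg
  exact ⟨L, hnodup, hLΔ, hgrd L [] rfl, hsatB, hjusL, hclosed, hThE⟩

end Decompose

section ArgBridge

variable {P : Type} {Sg : Set (PropForm P)} {Δ : Finset (Default P)}

theorem notInI_conLitSet_iff {L : List (Default P)} (hL : ∀ δ ∈ L, δ ∈ Δ) :
    ¬ InI (Xi Sg Δ) (conLitSet L) ↔ Satisfiable (baseOf Sg L) := by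
  rw [InI_iff (isTerm_conLitSet L), forcedSet_conLitSet hL, not_not]; rfl

theorem InI_insert_pre_iff {L : List (Default P)} {δ : Default P} (hδ : δ ∈ Δ)
    (hL : ∀ δ' ∈ L, δ' ∈ Δ) :
    InI (Xi Sg Δ) (insert (preLit δ) (conLitSet L)) ↔ Entails (baseOf Sg L) δ.pre := by
  have ht : IsTerm (insert (preLit δ) (conLitSet L)) :=
    isTerm_insert_pos (fun _ h => conLitSet_pos h) _ rfl
  rw [InI_iff ht, forcedSet_insert_pre hδ, forcedSet_conLitSet hL, Set.union_insert,
    not_sat_insert_neg_iff]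
  rfl

theorem notInI_insert_jus_iff {L : List (Default P)} {δ : Default P} (hδ : δ ∈ Δ)
    (i : Fin δ.jus.length) (hL : ∀ δ' ∈ L, δ' ∈ Δ) :
    ¬ InI (Xi Sg Δ) (insert (jusLit δ i) (conLitSet L)) ↔
      Satisfiable (insert (δ.jus.get i) (baseOf Sg L)) := by
  have ht : IsTerm (insert (jusLit δ i) (conLitSet L)) :=
    isTerm_insert_pos (fun _ h => conLitSet_pos h) _ rfl
  rw [InI_iff ht, forcedSet_insert_jus hδ i, forcedSet_conLitSet hL, Set.union_insert,
    not_not]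
  rfl

theorem applicable_iff {L : List (Default P)} {δ : Default P} (hδ : δ ∈ Δ)
    (hL : ∀ δ' ∈ L, δ' ∈ Δ) :
    Applicable (Xi Sg Δ) δ (conLitSet L) ↔
      Entails (baseOf Sg L) δ.pre ∧
        ∀ i : Fin δ.jus.length, Satisfiable (insert (δ.jus.get i) (baseOf Sg L)) := by
  unfold Applicable
  rw [InI_insert_pre_iff hδ hL]
  constructor
  · rintro ⟨h1, h2⟩
    exact ⟨h1, fun i => (notInI_insert_jus_iff hδ i hL).mp (h2 i)⟩
  · rintro ⟨h1, h2⟩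
    exact ⟨h1, fun i => (notInI_insert_jus_iff hδ i hL).mpr (h2 i)⟩

theorem isStruct_iff {L : List (Default P)} (hL : ∀ δ' ∈ L, δ' ∈ Δ) :
    IsStruct (Xi Sg Δ) (conLitSet L) {ℓ | ∃ δ ∈ L, ℓ ∈ jusLits δ} ↔
      Satisfiable (baseOf Sg L) ∧
      ∀ δ ∈ L, ∀ i : Fin δ.jus.length,
        Satisfiable (insert (δ.jus.get i) (baseOf Sg L)) := by
  unfold IsStruct
  constructor
  · rintro ⟨-, h2, h3⟩
    refine ⟨(notInI_conLitSet_iff hL).mp h2, ?_⟩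
    intro δ hδ i
    exact (notInI_insert_jus_iff (hL δ hδ) i hL).mp (h3 _ ⟨δ, hδ, i, rfl⟩)
  · rintro ⟨h1, h2⟩
    refine ⟨isTerm_conLitSet L, (notInI_conLitSet_iff hL).mpr h1, ?_⟩
    rintro ℓ ⟨δ, hδ, i, rfl⟩
    exact (notInI_insert_jus_iff (hL δ hδ) i hL).mpr (h2 δ hδ i)

theorem runList_append_singleton (L : List (Default P)) (δ : Default P) :
    runList (L ++ [δ]) = stepPair δ (runList L) := by
  unfold runList
  rw [List.foldl_append]
  rfl

theorem grounded_of_validFrom :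
    ∀ L₂ L₁ : List (Default P), (∀ δ ∈ L₁, δ ∈ Δ) → (∀ δ ∈ L₂, δ ∈ Δ) →
      ValidFrom (Xi Sg Δ) (runList L₁) L₂ → Grounded Sg L₁ L₂ := by
  intro L₂
  induction L₂ with
  | nil => intro _ _ _ _; trivial
  | cons δ L₂' ih =>
      intro L₁ h₁ h₂ hv
      obtain ⟨-, happ, hv'⟩ := hv
      have hδΔ : δ ∈ Δ := h₂ δ List.mem_cons_self
      constructor
      · have : (runList L₁).1 = conLitSet L₁ := by rw [runList_eq]
        rw [this] at happ
        exact ((applicable_iff hδΔ h₁).mp happ).1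
      · apply ih (L₁ ++ [δ])
        · intro δ' h'
          rcases List.mem_append.mp h' with h' | h'
          · exact h₁ δ' h'
          · rcases List.mem_cons.mp h' with rfl | h'
            · exact hδΔ
            · exact absurd h' List.not_mem_nil
        · exact fun δ' h' => h₂ δ' (List.mem_cons_of_mem _ h')
        · rw [runList_append_singleton]; exact hv'

theorem validFrom_of_grounded {L : List (Default P)} (hL : ∀ δ ∈ L, δ ∈ Δ)
    (hsatB : Satisfiable (baseOf Sg L))
    (hjus : ∀ δ ∈ L, ∀ i : Fin δ.jus.length,
      Satisfiable (insert (δ.jus.get i) (baseOf Sg L))) :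
    ∀ L₂ L₁ : List (Default P), L₁ ++ L₂ = L → Grounded Sg L₁ L₂ →
      ValidFrom (Xi Sg Δ) (runList L₁) L₂ := by
  intro L₂
  induction L₂ with
  | nil => intro _ _ _; trivial
  | cons δ L₂' ih =>
      intro L₁ happ hgr
      obtain ⟨hent, hgr'⟩ := hgr
      have hmem₁ : ∀ δ' ∈ L₁, δ' ∈ L := by
        intro δ' h'; rw [← happ]; exact List.mem_append_left _ h'
      have hδL : δ ∈ L := by
        rw [← happ]; exact List.mem_append_right _ List.mem_cons_self
      have h₁Δ : ∀ δ' ∈ L₁, δ' ∈ Δ := fun δ' h' => hL δ' (hmem₁ δ' h')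
      have hbsub : baseOf Sg L₁ ⊆ baseOf Sg L := baseOf_mono hmem₁
      refine ⟨?_, ?_, ?_⟩
      · rw [runList_eq]
        apply (isStruct_iff h₁Δ).mpr
        refine ⟨sat_mono hsatB hbsub, ?_⟩
        intro δ' h' i
        exact sat_mono (hjus δ' (hmem₁ δ' h') i) (Set.insert_subset_insert hbsub)
      · have : (runList L₁).1 = conLitSet L₁ := by rw [runList_eq]
        rw [this]
        apply (applicable_iff (hL δ hδL) h₁Δ).mpr
        refine ⟨hent, ?_⟩
        intro i
        exact sat_mono (hjus δ hδL i) (Set.insert_subset_insert hbsub)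
      · rw [← runList_append_singleton]
        apply ih
        · rw [← happ, List.append_assoc]; rfl
        · exact hgr'

end ArgBridge

section Complete

variable {P : Type}

/-- Complete a positive term by adding the negations of all other assumptions. -/
def completeTerm (α : Set (ALit P)) : Set (ALit P) :=
  α ∪ {ℓ | ℓ.sign = false ∧ (⟨ℓ.atom, true⟩ : ALit P) ∉ α}

theorem completeTerm_isTerm {α : Set (ALit P)} (h : ∀ ℓ ∈ α, ℓ.sign = true) :
    IsTerm (completeTerm α) := by
  rintro a ⟨hT, hF⟩
  rcases hF with hF | ⟨-, hF⟩
  · exact absurd (h _ hF) (by simp)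
  · rcases hT with hT | ⟨hs, -⟩
    · exact hF hT
    · simp at hs

theorem completeTerm_posPart {α : Set (ALit P)} (h : ∀ ℓ ∈ α, ℓ.sign = true) :
    posPart (completeTerm α) = α := by
  ext ℓ
  constructor
  · rintro ⟨hℓ | ⟨hs, -⟩, hsign⟩
    · exact hℓ
    · rw [hs] at hsign; cases hsign
  · intro hℓ
    exact ⟨Or.inl hℓ, h ℓ hℓ⟩

theorem completeTerm_maximal {α : Set (ALit P)} (h : ∀ ℓ ∈ α, ℓ.sign = true)
    {β : Set (ALit P)} (hβ : IsTerm β) (hsub : completeTerm α ⊆ β) :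
    β = completeTerm α := by
  apply Set.Subset.antisymm _ hsub
  rintro ⟨a, s⟩ hℓ
  cases s
  · right
    refine ⟨rfl, fun hmem => ?_⟩
    exact hβ a ⟨hsub (Or.inl hmem), hℓ⟩
  · left
    by_contra hmem
    have : (⟨a, false⟩ : ALit P) ∈ completeTerm α := Or.inr ⟨rfl, hmem⟩
    exact hβ a ⟨hℓ, hsub this⟩

end Complete
/-- Theorem 5.4 (ii).  A formula `φ ∈ L_P` is a skeptical consequence of
`⟨S, Δ⟩` (it belongs to all extensions) iff `dt(Ξ) ⊆ {α⁺ : α ∈ sp(φ; Ξ)}`. -/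
theorem skeptical_iff_dt_subset_sp
    {P : Type} (S : Finset (PropForm P)) (Δ : Finset (Default P))
    (φ : PropForm P) :
    (∀ E, IsExtension (↑S) Δ E → φ ∈ E) ↔
      dt (Xi (↑S) Δ) Δ ⊆ {β | ∃ α ∈ sp (Xi (↑S) Δ) (emb φ), β = posPart α} := by
  constructor
  · -- skeptical consequence implies every default term supports φ
    intro hLHS α hα
    obtain ⟨𝒜, Lg, hnd, hLΔ, hvalid, hrun, hstruct, hclos⟩ := hα
    have hα1 : α = conLitSet Lg := by
      have := congrArg Prod.fst hrun
      rw [runList_eq] at this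
      exact this.symm
    have h𝒜 : 𝒜 = {ℓ | ∃ δ ∈ Lg, ℓ ∈ jusLits δ} := by
      have := congrArg Prod.snd hrun
      rw [runList_eq] at this
      exact this.symm
    subst hα1; subst h𝒜
    obtain ⟨hsatB, hjusP⟩ := (isStruct_iff hLΔ).mp hstruct
    have hgrd : Grounded (↑S) [] Lg :=
      grounded_of_validFrom Lg [] (fun δ h => absurd h List.not_mem_nil) hLΔ hvalid
    have hclP : ∀ δ ∈ Δ, Entails (baseOf (↑S) Lg) δ.pre →
        (∀ i : Fin δ.jus.length,
          Satisfiable (insert (δ.jus.get i) (baseOf (↑S) Lg))) → δ ∈ Lg := by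
      intro δ hδ h1 h2
      exact hclos δ hδ ((applicable_iff hδ hLΔ).mpr ⟨h1, h2⟩)
    have hExt : IsExtension (↑S) Δ (Th (baseOf (↑S) Lg)) :=
      isExtension_of_list hLΔ hgrd hjusP hclP
    have hφ : Entails (baseOf (↑S) Lg) φ := hLHS _ hExt
    have hpos : ∀ ℓ ∈ conLitSet Lg, ℓ.sign = true := fun _ h => conLitSet_pos h
    refine ⟨completeTerm (conLitSet Lg), ⟨completeTerm_isTerm hpos, ?_, ?_⟩,
      (completeTerm_posPart hpos).symm⟩
    · rw [entails_emb_iff (completeTerm_isTerm hpos), ← forcedSet_posPart,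
        completeTerm_posPart hpos, forcedSet_conLitSet hLΔ]
      exact hφ
    · intro α'' ht hsub
      rw [completeTerm_maximal hpos ht hsub]
      rw [InI_iff (completeTerm_isTerm hpos), ← forcedSet_posPart,
        completeTerm_posPart hpos, forcedSet_conLitSet hLΔ, not_not]
      exact hsatB
  · -- every default term supports φ implies skeptical consequence
    intro hRHS E hE
    rcases ext_decompose hE with hall | ⟨Lg, hnd, hLΔ, hgrd, hsatB, hjusP, hclP, hThE⟩
    · exact hall φ
    have hdt : conLitSet Lg ∈ dt (Xi (↑S) Δ) Δ := by
      refine ⟨{ℓ | ∃ δ ∈ Lg, ℓ ∈ jusLits δ}, Lg, hnd, hLΔ, ?_, runList_eq Lg,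
        (isStruct_iff hLΔ).mpr ⟨hsatB, hjusP⟩, ?_⟩
      · exact validFrom_of_grounded hLΔ hsatB hjusP Lg [] rfl hgrd
      · intro δ hδ happ
        obtain ⟨h1, h2⟩ := (applicable_iff hδ hLΔ).mp happ
        exact hclP δ hδ h1 h2
    obtain ⟨α', ⟨hterm, hent, -⟩, hposeq⟩ := hRHS hdt
    rw [entails_emb_iff hterm, ← forcedSet_posPart, ← hposeq,
      forcedSet_conLitSet hLΔ] at hent
    rw [← hThE]
    exact hent
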